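/- Let δ be a real number. If 0 ≤ h < 1/n, then the inequality 1 − (1−h)δ/((1−hn)d) < (n−2+h)δ/((1−hn)d) holds if and only if δ > (1−hn)d/(n−1); if instead h > 1/n, it holds if and only if δ < (1−hn)d/(n−1). (This characterizes exactly when the trained GCN layer without self-loops, AXW, misclassifies a node whose neighborhood is perturbed by δ, and shows the least absolute perturbation needed is |δ₂| = |(1−hn)d/(n−1)|.) -/

import Mathlib

/-- Misclassification condition for the trained GCN layer without self-loops `AXW`:
if `0 ≤ h < 1/n` then `1 - (1-h)δ/((1-hn)d) < (n-2+h)δ/((1-hn)d)` iff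
`δ > (1-hn)d/(n-1)`; if instead `h > 1/n`, it holds iff `δ < (1-hn)d/(n-1)`. -/
theorem h2gcn_gcn_noselfloop_misclassification_threshold
    (n : ℕ) (hn : 2 ≤ n) (d h : ℝ) (hd : 0 < d) (hh0 : 0 ≤ h) (hh1 : h ≤ 1)
    (δ : ℝ) :
    (h < 1 / (n : ℝ) →
      (1 - (1 - h) * δ / ((1 - h * (n : ℝ)) * d) <
          ((n : ℝ) - 2 + h) * δ / ((1 - h * (n : ℝ)) * d) ↔
        δ > (1 - h * (n : ℝ)) * d / ((n : ℝ) - 1))) ∧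
    (h > 1 / (n : ℝ) →
      (1 - (1 - h) * δ / ((1 - h * (n : ℝ)) * d) <
          ((n : ℝ) - 2 + h) * δ / ((1 - h * (n : ℝ)) * d) ↔
        δ < (1 - h * (n : ℝ)) * d / ((n : ℝ) - 1))) := by
  have hn2 : (2 : ℝ) ≤ (n : ℝ) := by exact_mod_cast hn
  have hnpos : (0 : ℝ) < (n : ℝ) := by linarith
  have hn1 : (0 : ℝ) < (n : ℝ) - 1 := by linarith
  constructor
  · intro hlt
    have hc : 0 < 1 - h * (n : ℝ) := by
      rw [lt_div_iff₀ hnpos] at hlt; linarith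
    have hcd : 0 < (1 - h * (n : ℝ)) * d := mul_pos hc hd
    rw [gt_iff_lt, div_lt_iff₀ hn1, sub_lt_iff_lt_add, ← add_div,
      lt_div_iff₀ hcd, one_mul]
    constructor <;> intro H <;> nlinarith
  · intro hlt
    have hc : 1 - h * (n : ℝ) < 0 := by
      rw [gt_iff_lt, div_lt_iff₀ hnpos] at hlt; linarith
    have hcd : (1 - h * (n : ℝ)) * d < 0 := mul_neg_of_neg_of_pos hc hd
    rw [lt_div_iff₀ hn1, sub_lt_iff_lt_add, ← add_div,
      lt_div_iff_of_neg hcd, one_mul]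
    constructor <;> intro H <;> nlinarith
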